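/- arXiv:math/9409210 — 3 statements merged into one kernel-verified Lean document; each statement's English description precedes it below -/
import Mathlib

section
/- Let σ₁, σ₂ ∈ ℝ, let w be an admissible weight function, and let u, v : ℕ × ℤ → ℂ satisfy ‖u‖_{σ₁,w} := ∑_{m∈ℤ} w(m) sup_{n≥0} e^{σ₁ n}|u(n,m)| < ∞ and ‖v‖_{σ₂,w} < ∞. Define their m-convolution y(n,m) := ∑_{l∈ℤ} u(n,m-l)v(n,l). Then ‖y‖_{σ₁+σ₂,w} ≤ ‖u‖_{σ₁,w} · ‖v‖_{σ₂,w}. -/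
set_option maxHeartbeats 1000000

/-- Auxiliary shear equivalence on `ℤ × ℤ`. -/
def mConvShear : ℤ × ℤ ≃ ℤ × ℤ where
  toFun q := (q.1 + q.2, q.2)
  invFun p := (p.1 - p.2, p.2)
  left_inv q := by simp
  right_inv p := by simp


/-- The m-convolution satisfies ‖y‖_{σ₁+σ₂,w} ≤ ‖u‖_{σ₁,w}·‖v‖_{σ₂,w}. -/
theorem m_convolution_norm_estimate (σ₁ σ₂ : ℝ) (w : ℤ → ℝ)
    (h1 : ∀ m, 1 ≤ w m) (h2 : ∀ m n, w m ≤ w (m - n) * w n)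
    (u v : ℕ → ℤ → ℂ)
    (hub : ∀ m : ℤ, BddAbove (Set.range fun n : ℕ => Real.exp (σ₁ * n) * ‖u n m‖))
    (hvb : ∀ m : ℤ, BddAbove (Set.range fun n : ℕ => Real.exp (σ₂ * n) * ‖v n m‖))
    (hu : Summable fun m : ℤ => w m * ⨆ n : ℕ, Real.exp (σ₁ * n) * ‖u n m‖)
    (hv : Summable fun m : ℤ => w m * ⨆ n : ℕ, Real.exp (σ₂ * n) * ‖v n m‖) :
    ∑' m : ℤ, w m * ⨆ n : ℕ, Real.exp ((σ₁ + σ₂) * n) *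
        ‖∑' l : ℤ, u n (m - l) * v n l‖ ≤
      (∑' m : ℤ, w m * ⨆ n : ℕ, Real.exp (σ₁ * n) * ‖u n m‖) *
      (∑' m : ℤ, w m * ⨆ n : ℕ, Real.exp (σ₂ * n) * ‖v n m‖) := by
  classical
  set U : ℤ → ℝ := fun m => ⨆ n : ℕ, Real.exp (σ₁ * n) * ‖u n m‖ with hUdef
  set V : ℤ → ℝ := fun m => ⨆ n : ℕ, Real.exp (σ₂ * n) * ‖v n m‖ with hVdef
  have hw0 : ∀ m, (0:ℝ) ≤ w m := fun m => zero_le_one.trans (h1 m)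
  have hleU : ∀ (n : ℕ) (m : ℤ), Real.exp (σ₁ * n) * ‖u n m‖ ≤ U m := fun n m =>
    le_ciSup (hub m) n
  have hleV : ∀ (n : ℕ) (m : ℤ), Real.exp (σ₂ * n) * ‖v n m‖ ≤ V m := fun n m =>
    le_ciSup (hvb m) n
  have hU0 : ∀ m, 0 ≤ U m := fun m => le_trans (by positivity) (hleU 0 m)
  have hV0 : ∀ m, 0 ≤ V m := fun m => le_trans (by positivity) (hleV 0 m)
  have hwU0 : ∀ m, 0 ≤ w m * U m := fun m => mul_nonneg (hw0 m) (hU0 m)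
  have hwV0 : ∀ m, 0 ≤ w m * V m := fun m => mul_nonneg (hw0 m) (hV0 m)
  have hUs : Summable U :=
    hu.of_nonneg_of_le hU0 (fun m => le_mul_of_one_le_left (hU0 m) (h1 m))
  have hVs : Summable V :=
    hv.of_nonneg_of_le hV0 (fun m => le_mul_of_one_le_left (hV0 m) (h1 m))
  -- summability of the convolution of U and V
  have hUVs : ∀ m : ℤ, Summable fun l => U (m - l) * V l := by
    intro m
    refine Summable.of_nonneg_of_le (fun l => mul_nonneg (hU0 _) (hV0 _))
      (fun l => mul_le_mul_of_nonneg_right ?_ (hV0 l)) (hVs.mul_left (∑' k, U k))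
    exact hUs.le_tsum (m - l) (fun j _ => hU0 j)
  -- the pointwise key estimate
  have key : ∀ (n : ℕ) (m : ℤ),
      Real.exp ((σ₁ + σ₂) * n) * ‖∑' l : ℤ, u n (m - l) * v n l‖ ≤
        ∑' l : ℤ, U (m - l) * V l := by
    intro n m
    have habs : ∀ l : ℤ, Real.exp ((σ₁ + σ₂) * n) * ‖u n (m - l) * v n l‖ ≤
        U (m - l) * V l := by
      intro l
      have heq : Real.exp ((σ₁ + σ₂) * n) * ‖u n (m - l) * v n l‖
          = (Real.exp (σ₁ * n) * ‖u n (m - l)‖) *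
            (Real.exp (σ₂ * n) * ‖v n l‖) := by
        rw [norm_mul, add_mul, Real.exp_add]; ring
      rw [heq]
      exact mul_le_mul (hleU n (m - l)) (hleV n l) (by positivity) (hU0 _)
    have hsum_abs : Summable fun l : ℤ => ‖u n (m - l) * v n l‖ := by
      refine Summable.of_nonneg_of_le (fun l => by positivity) (fun l => ?_)
        ((hUVs m).mul_left (Real.exp (-((σ₁ + σ₂) * n))))
      calc ‖u n (m - l) * v n l‖
          = Real.exp (-((σ₁ + σ₂) * n)) *
              (Real.exp ((σ₁ + σ₂) * n) * ‖u n (m - l) * v n l‖) := by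
            rw [← mul_assoc, ← Real.exp_add]; simp
        _ ≤ Real.exp (-((σ₁ + σ₂) * n)) * (U (m - l) * V l) :=
            mul_le_mul_of_nonneg_left (habs l) (Real.exp_pos _).le
    calc Real.exp ((σ₁ + σ₂) * n) * ‖∑' l : ℤ, u n (m - l) * v n l‖
        ≤ Real.exp ((σ₁ + σ₂) * n) * ∑' l : ℤ, ‖u n (m - l) * v n l‖ := by
          refine mul_le_mul_of_nonneg_left ?_ (Real.exp_pos _).le
          simpa using
            norm_tsum_le_tsum_norm (f := fun l : ℤ => u n (m - l) * v n l)
              (by simpa using hsum_abs)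
      _ = ∑' l : ℤ, Real.exp ((σ₁ + σ₂) * n) * ‖u n (m - l) * v n l‖ :=
          (tsum_mul_left).symm
      _ ≤ ∑' l : ℤ, U (m - l) * V l :=
          Summable.tsum_le_tsum habs (hsum_abs.mul_left _) (hUVs m)
  -- product summability on ℤ × ℤ
  have hprod0 : Summable fun p : ℤ × ℤ => (w p.1 * U p.1) * (w p.2 * V p.2) :=
    hu.mul_of_nonneg hv hwU0 hwV0
  set f : ℤ × ℤ → ℝ := fun p => (w (p.1 - p.2) * U (p.1 - p.2)) * (w p.2 * V p.2) with hfdef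
  have hcomp : ∀ q : ℤ × ℤ, (w q.1 * U q.1) * (w q.2 * V q.2) = (f ∘ mConvShear) q := by
    intro q; simp [hfdef, mConvShear, Function.comp]
  have hprod : Summable f := (mConvShear.summable_iff).mp (hprod0.congr hcomp)
  have hslice : ∀ m : ℤ, Summable fun l : ℤ => f (m, l) := by
    intro m
    exact hprod.comp_injective (i := fun l : ℤ => ((m, l) : ℤ × ℤ))
      (fun a b h => by simpa using h)
  have hg : Summable fun m : ℤ => ∑' l : ℤ, f (m, l) :=
    (hprod.hasSum.prod_fiberwise fun m => (hslice m).hasSum).summable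
  -- pointwise estimate after multiplying by the weight
  have step : ∀ m : ℤ, w m * (⨆ n : ℕ, Real.exp ((σ₁ + σ₂) * n) *
      ‖∑' l : ℤ, u n (m - l) * v n l‖) ≤ ∑' l : ℤ, f (m, l) := by
    intro m
    have hS : (⨆ n : ℕ, Real.exp ((σ₁ + σ₂) * n) *
        ‖∑' l : ℤ, u n (m - l) * v n l‖) ≤ ∑' l : ℤ, U (m - l) * V l :=
      ciSup_le (fun n => key n m)
    calc w m * (⨆ n : ℕ, Real.exp ((σ₁ + σ₂) * n) *
          ‖∑' l : ℤ, u n (m - l) * v n l‖)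
        ≤ w m * ∑' l : ℤ, U (m - l) * V l := mul_le_mul_of_nonneg_left hS (hw0 m)
      _ = ∑' l : ℤ, w m * (U (m - l) * V l) := (tsum_mul_left).symm
      _ ≤ ∑' l : ℤ, f (m, l) := by
          refine Summable.tsum_le_tsum (fun l => ?_) ((hUVs m).mul_left _) (hslice m)
          have h' : w m * (U (m - l) * V l) ≤ (w (m - l) * w l) * (U (m - l) * V l) :=
            mul_le_mul_of_nonneg_right (h2 m l) (mul_nonneg (hU0 _) (hV0 _))
          calc w m * (U (m - l) * V l) ≤ (w (m - l) * w l) * (U (m - l) * V l) := h'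
            _ = f (m, l) := by simp [hfdef]; ring
  -- nonnegativity of the left terms
  have hS0 : ∀ m : ℤ, 0 ≤ w m * (⨆ n : ℕ, Real.exp ((σ₁ + σ₂) * n) *
      ‖∑' l : ℤ, u n (m - l) * v n l‖) := by
    intro m
    refine mul_nonneg (hw0 m) ?_
    have hbdd : BddAbove (Set.range fun n : ℕ => Real.exp ((σ₁ + σ₂) * n) *
        ‖∑' l : ℤ, u n (m - l) * v n l‖) := by
      refine ⟨∑' l : ℤ, U (m - l) * V l, ?_⟩
      rintro x ⟨n, rfl⟩
      exact key n m
    exact le_trans (by positivity) (le_ciSup hbdd 0)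
  have hLs : Summable fun m : ℤ => w m * ⨆ n : ℕ, Real.exp ((σ₁ + σ₂) * n) *
      ‖∑' l : ℤ, u n (m - l) * v n l‖ :=
    hg.of_nonneg_of_le hS0 step
  have e1 : ∑' m : ℤ, w m * ⨆ n : ℕ, Real.exp ((σ₁ + σ₂) * n) *
        ‖∑' l : ℤ, u n (m - l) * v n l‖ ≤ ∑' m : ℤ, ∑' l : ℤ, f (m, l) :=
    Summable.tsum_le_tsum step hLs hg
  have e2 : ∑' m : ℤ, ∑' l : ℤ, f (m, l) = ∑' p : ℤ × ℤ, f p :=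
    (Summable.tsum_prod' hprod hslice).symm
  have e3 : ∑' p : ℤ × ℤ, f p = ∑' q : ℤ × ℤ, (w q.1 * U q.1) * (w q.2 * V q.2) := by
    rw [← mConvShear.tsum_eq f]
    exact tsum_congr fun q => (hcomp q).symm
  have hv' : Summable fun m : ℤ => w m * V m := hv
  have e4 : ∑' q : ℤ × ℤ, (w q.1 * U q.1) * (w q.2 * V q.2)
      = ∑' a : ℤ, ∑' b : ℤ, (w a * U a) * (w b * V b) :=
    Summable.tsum_prod' hprod0 (fun a => hv'.mul_left (w a * U a))
  have e5 : ∑' a : ℤ, ∑' b : ℤ, (w a * U a) * (w b * V b)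
      = (∑' m : ℤ, w m * U m) * (∑' m : ℤ, w m * V m) := by
    simp_rw [tsum_mul_left, tsum_mul_right]
  exact e1.trans_eq (e2.trans (e3.trans (e4.trans e5)))
end

section
/- Let δ ∈ ℝ with |δ| < 2, β = -arccos(-δ/2), σ > 0, and let (y_n)_{n≥1} be a complex sequence with sup_{n≥1}|y_n e^{σn}| < ∞. Suppose (u_n)_{n≥0} with u₀ = 0 satisfies u_{n-1} + δu_n + u_{n+1} = y_n for all n ≥ 1, and the two conditions u₁ + ∑_{k=1}^∞ y_k cos(kβ) = 0 and ∑_{k=1}^∞ y_k sin(kβ) = 0. Then sup_{n≥1}|u_n e^{σn}| < ∞, i.e. u decays exponentially. -/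
/-- If the forcing decays exponentially and the two orthogonality conditions hold,
then the solution of the resonant recursion decays exponentially. -/
theorem resonant_solution_exponential_decay (δ : ℝ) (hδ : |δ| < 2) (β : ℝ)
    (hβ : β = -Real.arccos (-δ / 2)) (σ : ℝ) (hσ : 0 < σ) (y u : ℕ → ℂ)
    (hy : ∃ M : ℝ, ∀ n : ℕ, 1 ≤ n → ‖y n‖ * Real.exp (σ * n) ≤ M)
    (hu0 : u 0 = 0)
    (hrec : ∀ n : ℕ, 1 ≤ n → u (n - 1) + (δ : ℂ) * u n + u (n + 1) = y n)
    (hcos : u 1 + ∑' k : ℕ, y (k + 1) * (Real.cos (((k : ℝ) + 1) * β) : ℂ) = 0)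
    (hsin : (∑' k : ℕ, y (k + 1) * (Real.sin (((k : ℝ) + 1) * β) : ℂ)) = 0) :
    ∃ M : ℝ, ∀ n : ℕ, 1 ≤ n → ‖u n‖ * Real.exp (σ * n) ≤ M := by
  obtain ⟨M, hM⟩ := hy
  obtain ⟨hδl, hδr⟩ := abs_lt.mp hδ
  -- basic trig facts
  have hcosβ : Real.cos β = -δ / 2 := by
    rw [hβ, Real.cos_neg, Real.cos_arccos (by linarith) (by linarith)]
  have hδc : (δ : ℂ) = -(2 * (Real.cos β : ℂ)) := by
    have : δ = -(2 * Real.cos β) := by rw [hcosβ]; ring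
    exact_mod_cast this
  have hsb : 0 < |Real.sin β| := by
    rw [hβ, Real.sin_neg, abs_neg, Real.sin_arccos]
    rw [abs_of_nonneg (Real.sqrt_nonneg _)]
    apply Real.sqrt_pos.mpr
    nlinarith
  have hp : ((Real.sin β : ℂ)) ^ 2 + ((Real.cos β : ℂ)) ^ 2 = 1 := by
    exact_mod_cast Real.sin_sq_add_cos_sq β
  -- the forcing terms
  set F : ℕ → ℂ := fun k => y (k + 1) * (Real.cos (((k : ℝ) + 1) * β) : ℂ) with hF
  set G : ℕ → ℂ := fun k => y (k + 1) * (Real.sin (((k : ℝ) + 1) * β) : ℂ) with hG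
  -- complex trig sequences
  set cs : ℕ → ℂ := fun m => Complex.sin ((m : ℂ) * (β : ℂ)) with hcs
  set cc : ℕ → ℂ := fun m => Complex.cos ((m : ℂ) * (β : ℂ)) with hcc
  have hcs1 : cs 1 = (Real.sin β : ℂ) := by
    simp [hcs, Complex.ofReal_sin]
  have hcc1 : cc 1 = (Real.cos β : ℂ) := by
    simp [hcc, Complex.ofReal_cos]
  have hadd_s : ∀ m : ℕ, cs (m + 1) = cs m * (Real.cos β : ℂ) + cc m * (Real.sin β : ℂ) := by
    intro m
    simp only [hcs, hcc]
    rw [show ((m + 1 : ℕ) : ℂ) * (β : ℂ) = (m : ℂ) * β + β by push_cast; ring,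
      Complex.sin_add, ← Complex.ofReal_sin, ← Complex.ofReal_cos]
  have hadd_c : ∀ m : ℕ, cc (m + 1) = cc m * (Real.cos β : ℂ) - cs m * (Real.sin β : ℂ) := by
    intro m
    simp only [hcs, hcc]
    rw [show ((m + 1 : ℕ) : ℂ) * (β : ℂ) = (m : ℂ) * β + β by push_cast; ring,
      Complex.cos_add, ← Complex.ofReal_sin, ← Complex.ofReal_cos]
  have hsub_s : ∀ m : ℕ, cs (m + 1) = cs (m + 2) * (Real.cos β : ℂ) - cc (m + 2) * (Real.sin β : ℂ) := by
    intro m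
    simp only [hcs, hcc]
    rw [show ((m + 1 : ℕ) : ℂ) * (β : ℂ) = ((m + 2 : ℕ) : ℂ) * β - β by push_cast; ring,
      Complex.sin_sub, ← Complex.ofReal_sin, ← Complex.ofReal_cos]
  have hsub_c : ∀ m : ℕ, cc (m + 1) = cc (m + 2) * (Real.cos β : ℂ) + cs (m + 2) * (Real.sin β : ℂ) := by
    intro m
    simp only [hcs, hcc]
    rw [show ((m + 1 : ℕ) : ℂ) * (β : ℂ) = ((m + 2 : ℕ) : ℂ) * β - β by push_cast; ring,
      Complex.cos_sub, ← Complex.ofReal_sin, ← Complex.ofReal_cos]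
  have hpyth : ∀ m : ℕ, cs m ^ 2 + cc m ^ 2 = 1 := by
    intro m
    simp only [hcs, hcc]
    exact Complex.sin_sq_add_cos_sq _
  have hFc : ∀ k : ℕ, F k = y (k + 1) * cc (k + 1) := by
    intro k
    simp only [hF, hcc]
    congr 1
    rw [Complex.ofReal_cos]
    congr 1
    push_cast
    ring
  have hGc : ∀ k : ℕ, G k = y (k + 1) * cs (k + 1) := by
    intro k
    simp only [hG, hcs]
    congr 1
    rw [Complex.ofReal_sin]
    congr 1
    push_cast
    ring
  -- explicit formula for u
  have key : ∀ n : ℕ, u (n + 1) * (Real.sin β : ℂ) =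
      cs (n + 1) * (u 1 + ∑ k ∈ Finset.range n, F k)
      - cc (n + 1) * (∑ k ∈ Finset.range n, G k) := by
    have main : ∀ n : ℕ,
        (u (n + 1) * (Real.sin β : ℂ) =
          cs (n + 1) * (u 1 + ∑ k ∈ Finset.range n, F k)
          - cc (n + 1) * (∑ k ∈ Finset.range n, G k)) ∧
        (u (n + 2) * (Real.sin β : ℂ) =
          cs (n + 2) * (u 1 + ∑ k ∈ Finset.range (n + 1), F k)
          - cc (n + 2) * (∑ k ∈ Finset.range (n + 1), G k)) := by
      intro n
      induction n with
      | zero =>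
        constructor
        · simp only [Finset.sum_range_zero, add_zero, zero_add, mul_zero, sub_zero]
          rw [hcs1]
          ring
        · have hr := hrec 1 le_rfl
          simp only [show (1 : ℕ) - 1 = 0 from rfl, hu0, zero_add] at hr
          have hu2 : u 2 = y 1 - (δ : ℂ) * u 1 := by linear_combination hr
          have hcs2 : cs 2 = (Real.sin β : ℂ) * (Real.cos β : ℂ) + (Real.cos β : ℂ) * (Real.sin β : ℂ) := by
            have h := hadd_s 1
            rw [hcs1, hcc1] at h
            exact h
          have hcc2 : cc 2 = (Real.cos β : ℂ) * (Real.cos β : ℂ) - (Real.sin β : ℂ) * (Real.sin β : ℂ) := by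
            have h := hadd_c 1
            rw [hcs1, hcc1] at h
            exact h
          have hF0 : F 0 = y 1 * (Real.cos β : ℂ) := by
            have h := hFc 0
            norm_num at h
            rwa [hcc1] at h
          have hG0 : G 0 = y 1 * (Real.sin β : ℂ) := by
            have h := hGc 0
            norm_num at h
            rwa [hcs1] at h
          simp only [Finset.sum_range_succ, Finset.sum_range_zero, zero_add]
          rw [hu2, hδc, hF0, hG0, hcs2, hcc2]
          linear_combination (-(y 1 * (Real.sin β : ℂ))) * hp
      | succ n ih =>
        obtain ⟨ih1, ih2⟩ := ih
        refine ⟨ih2, ?_⟩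
        show u (n + 2 + 1) * (Real.sin β : ℂ) =
          cs (n + 2 + 1) * (u 1 + ∑ k ∈ Finset.range (n + 2), F k)
          - cc (n + 2 + 1) * (∑ k ∈ Finset.range (n + 2), G k)
        have hr := hrec (n + 2) (by omega)
        simp only [show n + 2 - 1 = n + 1 from rfl] at hr
        have hu3 : u (n + 2 + 1) = y (n + 2) - (δ : ℂ) * u (n + 2) - u (n + 1) := by
          linear_combination hr
        simp only [Finset.sum_range_succ]
        rw [hFc (n + 1), hFc n, hGc (n + 1), hGc n, hu3, hδc,
          hadd_s (n + 2), hsub_s n, hsub_c n]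
        simp only [Finset.sum_range_succ] at ih2
        rw [hFc n, hGc n, hsub_s n, hsub_c n] at ih2
        rw [hsub_s n, hsub_c n] at ih1
        have hadd_c' := hadd_c (n + 2)
        rw [hadd_c']
        linear_combination (2 * (Real.cos β : ℂ)) * ih2 - ih1
          - (y (n + 2) * (Real.sin β : ℂ)) * hpyth (n + 2)
    intro n
    exact (main n).1
  -- geometric bounds
  have hM0 : 0 ≤ M := le_trans (by positivity) (hM 1 le_rfl)
  set r : ℝ := Real.exp (-σ) with hr
  have hr0 : 0 < r := Real.exp_pos _
  have hr1 : r < 1 := Real.exp_lt_one_iff.mpr (by linarith)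
  have hrpow : ∀ n : ℕ, r ^ n = Real.exp (-(σ * n)) := by
    intro n
    rw [hr, ← Real.exp_nat_mul]
    ring_nf
  have hyr : ∀ n : ℕ, 1 ≤ n → ‖y n‖ ≤ M * r ^ n := by
    intro n hn
    have h1 := hM n hn
    have h2 : ‖y n‖ = (‖y n‖ * Real.exp (σ * n)) * Real.exp (-(σ * n)) := by
      rw [mul_assoc, ← Real.exp_add]
      simp
    rw [h2, hrpow]
    exact mul_le_mul_of_nonneg_right h1 (Real.exp_pos _).le
  have hFb : ∀ k : ℕ, ‖F k‖ ≤ (M * r) * r ^ k := by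
    intro k
    have : ‖F k‖ = ‖y (k + 1)‖ * |Real.cos (((k : ℝ) + 1) * β)| := by
      simp only [hF, norm_mul, Complex.norm_real, Real.norm_eq_abs]
    rw [this]
    calc ‖y (k + 1)‖ * |Real.cos (((k : ℝ) + 1) * β)|
        ≤ ‖y (k + 1)‖ * 1 :=
          mul_le_mul_of_nonneg_left (Real.abs_cos_le_one _) (norm_nonneg _)
      _ = ‖y (k + 1)‖ := mul_one _
      _ ≤ M * r ^ (k + 1) := hyr (k + 1) (by omega)
      _ = (M * r) * r ^ k := by ring
  have hGb : ∀ k : ℕ, ‖G k‖ ≤ (M * r) * r ^ k := by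
    intro k
    have : ‖G k‖ = ‖y (k + 1)‖ * |Real.sin (((k : ℝ) + 1) * β)| := by
      simp only [hG, norm_mul, Complex.norm_real, Real.norm_eq_abs]
    rw [this]
    calc ‖y (k + 1)‖ * |Real.sin (((k : ℝ) + 1) * β)|
        ≤ ‖y (k + 1)‖ * 1 :=
          mul_le_mul_of_nonneg_left (Real.abs_sin_le_one _) (norm_nonneg _)
      _ = ‖y (k + 1)‖ := mul_one _
      _ ≤ M * r ^ (k + 1) := hyr (k + 1) (by omega)
      _ = (M * r) * r ^ k := by ring
  have hgeo : Summable (fun k : ℕ => (M * r) * r ^ k) :=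
    (summable_geometric_of_lt_one hr0.le hr1).mul_left _
  have hFs : Summable F := Summable.of_norm_bounded hgeo hFb
  have hGs : Summable G := Summable.of_norm_bounded hgeo hGb
  -- tail bounds
  have htail : ∀ f : ℕ → ℂ, (∀ k : ℕ, ‖f k‖ ≤ (M * r) * r ^ k) → Summable f →
      ∀ n : ℕ, ‖∑' k : ℕ, f (k + n)‖ ≤ (M * r) * r ^ n * (1 - r)⁻¹ := by
    intro f hfb hfs n
    have hb : ∀ k : ℕ, ‖f (k + n)‖ ≤ ((M * r) * r ^ n) * r ^ k := by
      intro k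
      calc ‖f (k + n)‖ ≤ (M * r) * r ^ (k + n) := hfb (k + n)
        _ = ((M * r) * r ^ n) * r ^ k := by ring
    have hgeo' : Summable (fun k : ℕ => ((M * r) * r ^ n) * r ^ k) :=
      (summable_geometric_of_lt_one hr0.le hr1).mul_left _
    have hns : Summable (fun k : ℕ => ‖f (k + n)‖) :=
      Summable.of_nonneg_of_le (fun k => norm_nonneg _) hb hgeo'
    calc ‖∑' k : ℕ, f (k + n)‖ ≤ ∑' k : ℕ, ‖f (k + n)‖ := norm_tsum_le_tsum_norm hns
      _ ≤ ∑' k : ℕ, ((M * r) * r ^ n) * r ^ k := Summable.tsum_le_tsum hb hns hgeo'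
      _ = ((M * r) * r ^ n) * ∑' k : ℕ, r ^ k := tsum_mul_left
      _ = (M * r) * r ^ n * (1 - r)⁻¹ := by rw [tsum_geometric_of_lt_one hr0.le hr1]
  -- bounds on the oscillatory factors
  have hcsle : ∀ m : ℕ, ‖cs m‖ ≤ 1 := by
    intro m
    have h1 : ((m : ℂ) * (β : ℂ)) = (((m : ℝ) * β : ℝ) : ℂ) := by push_cast; ring
    have : cs m = ((Real.sin ((m : ℝ) * β) : ℝ) : ℂ) := by
      simp only [hcs]
      rw [h1, Complex.ofReal_sin]
    rw [this, Complex.norm_real, Real.norm_eq_abs]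
    exact Real.abs_sin_le_one ((m : ℝ) * β)
  have hccle : ∀ m : ℕ, ‖cc m‖ ≤ 1 := by
    intro m
    have h1 : ((m : ℂ) * (β : ℂ)) = (((m : ℝ) * β : ℝ) : ℂ) := by push_cast; ring
    have : cc m = ((Real.cos ((m : ℝ) * β) : ℝ) : ℂ) := by
      simp only [hcc]
      rw [h1, Complex.ofReal_cos]
    rw [this, Complex.norm_real, Real.norm_eq_abs]
    exact Real.abs_cos_le_one ((m : ℝ) * β)
  -- final bound
  refine ⟨2 * M * (1 - r)⁻¹ / |Real.sin β|, ?_⟩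
  intro n hn
  obtain ⟨m, rfl⟩ : ∃ m : ℕ, n = m + 1 := ⟨n - 1, by omega⟩
  have hK := key m
  have hSm : u 1 + ∑ k ∈ Finset.range m, F k = -(∑' k : ℕ, F (k + m)) := by
    have h1 := Summable.sum_add_tsum_nat_add (f := F) m hFs
    have hc : u 1 + ∑' k : ℕ, F k = 0 := hcos
    linear_combination hc + h1
  have hTm : (∑ k ∈ Finset.range m, G k) = -(∑' k : ℕ, G (k + m)) := by
    have h1 := Summable.sum_add_tsum_nat_add (f := G) m hGs
    have hs0 : (∑' k : ℕ, G k) = 0 := hsin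
    linear_combination hs0 + h1
  rw [hSm, hTm] at hK
  have hnorm : ‖u (m + 1)‖ * |Real.sin β| ≤ 2 * M * r ^ (m + 1) * (1 - r)⁻¹ := by
    have h1 : ‖u (m + 1)‖ * |Real.sin β| = ‖u (m + 1) * (Real.sin β : ℂ)‖ := by
      rw [norm_mul, Complex.norm_real, Real.norm_eq_abs]
    rw [h1, hK]
    calc ‖cs (m + 1) * -(∑' k : ℕ, F (k + m)) - cc (m + 1) * -(∑' k : ℕ, G (k + m))‖
        ≤ ‖cs (m + 1) * -(∑' k : ℕ, F (k + m))‖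
          + ‖cc (m + 1) * -(∑' k : ℕ, G (k + m))‖ := norm_sub_le _ _
      _ ≤ 1 * ‖∑' k : ℕ, F (k + m)‖ + 1 * ‖∑' k : ℕ, G (k + m)‖ := by
          rw [norm_mul, norm_mul, norm_neg, norm_neg]
          gcongr
          · exact hcsle (m + 1)
          · exact hccle (m + 1)
      _ = ‖∑' k : ℕ, F (k + m)‖ + ‖∑' k : ℕ, G (k + m)‖ := by ring
      _ ≤ (M * r) * r ^ m * (1 - r)⁻¹ + (M * r) * r ^ m * (1 - r)⁻¹ :=
          add_le_add (htail F hFb hFs m) (htail G hGb hGs m)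
      _ = 2 * M * r ^ (m + 1) * (1 - r)⁻¹ := by ring
  -- multiply through by the exponential
  have hE : r ^ (m + 1) * Real.exp (σ * ((m + 1 : ℕ) : ℝ)) = 1 := by
    rw [hrpow (m + 1), ← Real.exp_add]
    norm_num
  have hE0 : 0 < Real.exp (σ * ((m + 1 : ℕ) : ℝ)) := Real.exp_pos _
  rw [le_div_iff₀ hsb]
  calc ‖u (m + 1)‖ * Real.exp (σ * ((m + 1 : ℕ) : ℝ)) * |Real.sin β|
      = (‖u (m + 1)‖ * |Real.sin β|) * Real.exp (σ * ((m + 1 : ℕ) : ℝ)) := by ring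
    _ ≤ (2 * M * r ^ (m + 1) * (1 - r)⁻¹) * Real.exp (σ * ((m + 1 : ℕ) : ℝ)) :=
        mul_le_mul_of_nonneg_right hnorm hE0.le
    _ = (2 * M * (1 - r)⁻¹) * (r ^ (m + 1) * Real.exp (σ * ((m + 1 : ℕ) : ℝ))) := by ring
    _ = 2 * M * (1 - r)⁻¹ := by rw [hE, mul_one]
end

section
/- Let Λ(t) be a diagonal matrix of distinct real eigenvalues λ_j(t) of the real symmetric N×N matrix L_N(t), and let Ψ(t) be the orthogonal matrix of normalized eigenvectors, so L_N Ψ = ΨΛ. Suppose L_N satisfies dL_N/dt = [B_N, L_N] − ρ(t)P where B_N is antisymmetric, P = e₁e₁ᵀ is the rank-one projection onto the first coordinate, and ρ(t) ∈ ℝ. Let f denote the first row of Ψ (so f_j is the first component of the j-th normalized eigenvector). Then the matrix A := ΨᵀΨ̇ − ΨᵀB_NΨ is antisymmetric, and the eigenvalues satisfy λ̇_j = −ρ·f_j² for each j, and consequently ∑_{j=1}^N λ̇_j = −ρ. -/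
open Matrix

private lemma matMulDeriv {N : ℕ} {M K : ℝ → Matrix (Fin N) (Fin N) ℝ}
    {M' K' : Matrix (Fin N) (Fin N) ℝ} {t : ℝ}
    (hM : ∀ i j, HasDerivAt (fun s => M s i j) (M' i j) t)
    (hK : ∀ i j, HasDerivAt (fun s => K s i j) (K' i j) t)
    (i j : Fin N) :
    HasDerivAt (fun s => (M s * K s) i j) ((M' * K t + M t * K') i j) t := by
  have h : HasDerivAt (fun s => ∑ k, M s i k * K s k j)
      (∑ k, (M' i k * K t k j + M t i k * K' k j)) t :=
    HasDerivAt.fun_sum fun k _ => (hM i k).mul (hK k j)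
  simpa [Matrix.mul_apply, Matrix.add_apply, Finset.sum_add_distrib] using h

/-- Eigenvalue dynamics for the forced Lax equation: A = ΨᵀΨ̇ - ΨᵀBΨ is
antisymmetric, λ̇_j = -ρ f_j², and ∑_j λ̇_j = -ρ. -/
theorem forced_lax_eigenvalue_dynamics (N : ℕ) (hN : 0 < N)
    (L B Ψ Ψ' : ℝ → Matrix (Fin N) (Fin N) ℝ)
    (lam lam' : ℝ → Fin N → ℝ) (ρ : ℝ → ℝ)
    (hLsymm : ∀ t, (L t).IsSymm)
    (hBanti : ∀ t, (B t)ᵀ = -(B t))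
    (hdistinct : ∀ t, ∀ i j : Fin N, i ≠ j → lam t i ≠ lam t j)
    (horth : ∀ t, (Ψ t)ᵀ * Ψ t = 1)
    (heig : ∀ t, L t * Ψ t = Ψ t * Matrix.diagonal (lam t))
    (hΨ : ∀ t, ∀ i j : Fin N, HasDerivAt (fun s => Ψ s i j) (Ψ' t i j) t)
    (hlam : ∀ t, ∀ j : Fin N, HasDerivAt (fun s => lam s j) (lam' t j) t)
    (hLax : ∀ t, ∀ i j : Fin N, HasDerivAt (fun s => L s i j)
      ((B t * L t - L t * B t -
        ρ t • Matrix.single (⟨0, hN⟩ : Fin N) (⟨0, hN⟩ : Fin N) (1 : ℝ)) i j) t) :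
    ∀ t : ℝ,
      ((Ψ t)ᵀ * Ψ' t - (Ψ t)ᵀ * B t * Ψ t)ᵀ =
          -((Ψ t)ᵀ * Ψ' t - (Ψ t)ᵀ * B t * Ψ t) ∧
      (∀ j : Fin N, lam' t j = -ρ t * (Ψ t ⟨0, hN⟩ j) ^ 2) ∧
      ∑ j : Fin N, lam' t j = -ρ t := by
  intro t
  set z : Fin N := ⟨0, hN⟩
  set Pm : Matrix (Fin N) (Fin N) ℝ := Matrix.single z z (1 : ℝ) with hPm
  set Q := Ψ t with hQ
  set Q' := Ψ' t with hQ'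
  set Λ : Matrix (Fin N) (Fin N) ℝ := Matrix.diagonal (lam t) with hΛ
  set Lt := L t with hLt
  set L' : Matrix (Fin N) (Fin N) ℝ := B t * Lt - Lt * B t - ρ t • Pm with hL'
  -- derivative of transpose of Ψ
  have hΨT : ∀ i j, HasDerivAt (fun s => (Ψ s)ᵀ i j) (Q'ᵀ i j) t := fun i j => hΨ t j i
  -- derivative of orthogonality relation gives skew condition
  have hskew : Q'ᵀ * Q + Qᵀ * Q' = 0 := by
    ext i j
    have h1 : HasDerivAt (fun s => ((Ψ s)ᵀ * Ψ s) i j) ((Q'ᵀ * Q + Qᵀ * Q') i j) t :=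
      matMulDeriv hΨT (hΨ t) i j
    have h2 : (fun s => ((Ψ s)ᵀ * Ψ s) i j) = fun _ => (1 : Matrix (Fin N) (Fin N) ℝ) i j := by
      funext s; rw [horth s]
    rw [h2] at h1
    have := h1.unique (hasDerivAt_const t _)
    simpa using this
  have hQ'Q : Q'ᵀ * Q = -(Qᵀ * Q') := by linear_combination (norm := noncomm_ring) hskew
  -- key identities
  have hQQ : Qᵀ * Q = 1 := horth t
  have hQQt : Q * Qᵀ = 1 := mul_eq_one_comm.mp hQQ
  have hLQ : Lt * Q = Q * Λ := heig t
  have hQL : Qᵀ * Lt = Λ * Qᵀ := by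
    have hs : Ltᵀ = Lt := (hLsymm t)
    calc Qᵀ * Lt = Qᵀ * Ltᵀ := by rw [hs]
      _ = (Lt * Q)ᵀ := by rw [Matrix.transpose_mul]
      _ = (Q * Λ)ᵀ := by rw [hLQ]
      _ = Λ * Qᵀ := by rw [Matrix.transpose_mul, Matrix.diagonal_transpose]
  -- Part 1: antisymmetry
  have part1 : (Qᵀ * Q' - Qᵀ * B t * Q)ᵀ = -(Qᵀ * Q' - Qᵀ * B t * Q) := by
    rw [Matrix.transpose_sub, Matrix.transpose_mul, Matrix.transpose_mul, Matrix.transpose_mul,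
      Matrix.transpose_transpose, hBanti t, hQ'Q]
    noncomm_ring
  -- Part 2: eigenvalue derivative
  have part2 : ∀ j : Fin N, lam' t j = -ρ t * (Q z j) ^ 2 := by
    intro j
    -- derivative of (ΨᵀLΨ)_{jj}
    have hML : ∀ i k, HasDerivAt (fun s => ((Ψ s)ᵀ * L s) i k)
        ((Q'ᵀ * Lt + Qᵀ * L') i k) t := fun i k => matMulDeriv hΨT (hLax t) i k
    have hD : HasDerivAt (fun s => ((Ψ s)ᵀ * L s * Ψ s) j j)
        (((Q'ᵀ * Lt + Qᵀ * L') * Q + (Qᵀ * Lt) * Q') j j) t :=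
      matMulDeriv hML (hΨ t) j j
    have hdiag : ∀ s, (Ψ s)ᵀ * L s * Ψ s = Matrix.diagonal (lam s) := by
      intro s
      rw [Matrix.mul_assoc, heig s, ← Matrix.mul_assoc, horth s, Matrix.one_mul]
    have h2 : (fun s => ((Ψ s)ᵀ * L s * Ψ s) j j) = fun s => lam s j := by
      funext s; rw [hdiag s, Matrix.diagonal_apply_eq]
    rw [h2] at hD
    have huniq : lam' t j = ((Q'ᵀ * Lt + Qᵀ * L') * Q + (Qᵀ * Lt) * Q') j j :=
      (hlam t j).unique hD
    -- simplify the matrix expression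
    have hmat : (Q'ᵀ * Lt + Qᵀ * L') * Q + (Qᵀ * Lt) * Q' =
        -(Qᵀ * Q') * Λ + ((Qᵀ * B t * Q) * Λ - Λ * (Qᵀ * B t * Q) - ρ t • (Qᵀ * Pm * Q))
          + Λ * (Qᵀ * Q') := by
      have e1 : Q'ᵀ * Lt * Q = -(Qᵀ * Q') * Λ := by
        rw [Matrix.mul_assoc, hLQ, ← Matrix.mul_assoc, hQ'Q]
      have e2 : Qᵀ * L' * Q = (Qᵀ * B t * Q) * Λ - Λ * (Qᵀ * B t * Q) - ρ t • (Qᵀ * Pm * Q) := by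
        rw [hL']
        have a1 : Qᵀ * (B t * Lt) * Q = (Qᵀ * B t * Q) * Λ := by
          rw [Matrix.mul_assoc Qᵀ, Matrix.mul_assoc (B t), hLQ]
          simp only [Matrix.mul_assoc]
        have a2 : Qᵀ * (Lt * B t) * Q = Λ * (Qᵀ * B t * Q) := by
          rw [← Matrix.mul_assoc Qᵀ Lt (B t), hQL]
          simp only [Matrix.mul_assoc]
        rw [Matrix.mul_sub, Matrix.sub_mul, Matrix.mul_sub, Matrix.sub_mul, a1, a2,
          Matrix.mul_smul, Matrix.smul_mul, ← Matrix.mul_assoc]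
      have e3 : (Qᵀ * Lt) * Q' = Λ * (Qᵀ * Q') := by
        rw [hQL, Matrix.mul_assoc]
      rw [Matrix.add_mul, e3, Matrix.mul_assoc Q'ᵀ Lt Q, ← Matrix.mul_assoc Q'ᵀ Lt Q]
      rw [e1, e2]
    rw [hmat] at huniq
    have hP : (Qᵀ * Pm * Q) j j = Q z j * Q z j := by
      simp [hPm, Matrix.mul_apply, Matrix.single, Matrix.transpose_apply, ite_and,
        Finset.sum_ite_eq, mul_ite, mul_comm]
    rw [Matrix.add_apply, Matrix.add_apply, Matrix.sub_apply, Matrix.sub_apply,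
      Matrix.smul_apply, hP] at huniq
    rw [huniq, Matrix.mul_diagonal, Matrix.mul_diagonal, Matrix.diagonal_mul,
      Matrix.diagonal_mul, Matrix.neg_apply]
    simp only [smul_eq_mul]
    ring
  refine ⟨part1, part2, ?_⟩
  have hsum : ∑ j, Q z j * Q z j = 1 := by
    have := congrFun (congrFun hQQt z) z
    simpa [Matrix.mul_apply, Matrix.transpose_apply] using this
  calc ∑ j : Fin N, lam' t j = ∑ j : Fin N, -ρ t * (Q z j) ^ 2 := by
        exact Finset.sum_congr rfl fun j _ => part2 j
    _ = -ρ t * ∑ j, Q z j * Q z j := by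
        rw [Finset.mul_sum]; exact Finset.sum_congr rfl fun j _ => by ring
    _ = -ρ t := by rw [hsum, mul_one]
end
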